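/- Let 0 ≤ x < x+h < 1 with binary expansions x = Σ 2^{-k}ε_k, x+h = Σ 2^{-k}ε'_k (terminating expansion chosen for dyadic rationals), let p be the integer with 2^{-p-1} < h ≤ 2^{-p}, and let k_0 = max{k : ε_j = ε'_j for all j ≤ k} (k_0 = 0 if ε_1 ≠ ε'_1). If k_0 < p, then Σ_{k=p+1}^∞ 2^{-k}(1 - ε_k - ε'_k) ≤ h; and moreover if m ≥ 0 is such that ε_{p+m+1} = 0, then Σ_{k=p+1}^∞ 2^{-k}(1 - ε_k - ε'_k) ≥ -h(1 - 2^{-m}). -/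

import Mathlib

open Filter Topology Set

noncomputable def binDigit (x : ℝ) (k : ℕ) : ℕ := ⌊x * 2^k⌋.toNat % 2

lemma binDigit_as_floor (y : ℝ) (hy : 0 ≤ y) (j : ℕ) :
    (binDigit y (j+1) : ℝ) = ⌊y * 2^(j+1)⌋ - 2 * ⌊y * 2^j⌋ := by
  have h2m : (0:ℤ) ≤ ⌊y * 2^j⌋ := Int.floor_nonneg.2 (by positivity)
  have h2n : (0:ℤ) ≤ ⌊y * 2^(j+1)⌋ := Int.floor_nonneg.2 (by positivity)
  have hf1 : (⌊y * 2^j⌋ : ℝ) ≤ y * 2^j := Int.floor_le _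
  have hf2 : y * 2^j < ⌊y * 2^j⌋ + 1 := Int.lt_floor_add_one _
  have heq : y * 2^(j+1) = y * 2^j * 2 := by rw [pow_succ]; ring
  have h1 : 2 * ⌊y * 2^j⌋ ≤ ⌊y * 2^(j+1)⌋ := by
    rw [Int.le_floor]
    push_cast
    linarith
  have h2 : ⌊y * 2^(j+1)⌋ ≤ 2 * ⌊y * 2^j⌋ + 1 := by
    have hR : (⌊y * 2^(j+1)⌋ : ℝ) < 2 * ⌊y * 2^j⌋ + 2 := by
      have := Int.floor_le (y * 2^(j+1))
      linarith
    have hZ : ⌊y * 2^(j+1)⌋ < 2 * ⌊y * 2^j⌋ + 2 := by exact_mod_cast hR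
    omega
  have key : ((⌊y * 2^(j+1)⌋.toNat % 2 : ℕ) : ℤ) = ⌊y * 2^(j+1)⌋ - 2 * ⌊y * 2^j⌋ := by
    omega
  unfold binDigit
  rw [show ((⌊y * 2^(j+1)⌋.toNat % 2 : ℕ) : ℝ)
      = (((⌊y * 2^(j+1)⌋.toNat % 2 : ℕ) : ℤ) : ℝ) by norm_cast, key]
  push_cast; ring

lemma digit_partial (y : ℝ) (hy : 0 ≤ y) (p : ℕ) : ∀ N : ℕ,
    ∑ k ∈ Finset.range N, (binDigit y (p+1+k) : ℝ) / 2^(p+1+k)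
      = ⌊y * 2^(p+N)⌋ / 2^(p+N) - ⌊y * 2^p⌋ / 2^p := by
  intro N
  induction N with
  | zero => simp
  | succ n ih =>
      rw [Finset.sum_range_succ, ih]
      have e : p + 1 + n = (p + n) + 1 := by omega
      rw [e, binDigit_as_floor y hy (p+n)]
      have h2 : (2:ℝ)^(p+n+1) = 2^(p+n) * 2 := by rw [pow_succ]
      have hne : (2:ℝ)^(p+n) ≠ 0 := by positivity
      field_simp [h2]
      ring

lemma digit_hasSum (y : ℝ) (hy : 0 ≤ y) (p : ℕ) :
    HasSum (fun k : ℕ => (binDigit y (p+1+k) : ℝ) / 2^(p+1+k))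
      (y - ⌊y * 2^p⌋ / 2^p) := by
  rw [hasSum_iff_tendsto_nat_of_nonneg (fun k => by positivity)]
  simp only [digit_partial y hy p]
  have hmain : Tendsto (fun N : ℕ => (⌊y * 2^(p+N)⌋ : ℝ) / 2^(p+N)) atTop (𝓝 y) := by
    refine tendsto_of_tendsto_of_tendsto_of_le_of_le
      (g := fun N : ℕ => y - (1/2:ℝ)^p * (1/2)^N) (h := fun _ : ℕ => y) ?_ ?_ ?_ ?_
    · have : Tendsto (fun N : ℕ => (1/2:ℝ)^p * (1/2)^N) atTop (𝓝 0) := by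
        have := tendsto_pow_atTop_nhds_zero_of_lt_one (by norm_num : (0:ℝ) ≤ 1/2)
          (by norm_num : (1/2:ℝ) < 1)
        simpa using this.const_mul ((1/2:ℝ)^p)
      simpa using tendsto_const_nhds.sub this
    · exact tendsto_const_nhds
    · intro N
      have hpos : (0:ℝ) < 2^(p+N) := by positivity
      have hlt := Int.lt_floor_add_one (y * 2^(p+N))
      simp only []
      rw [le_div_iff₀ hpos]
      have hhp : (1/2:ℝ)^p * (1/2)^N = 1/2^(p+N) := by
        rw [← pow_add, div_pow]; norm_num
      rw [hhp]
      have hexp : (y - 1/2^(p+N)) * 2^(p+N) = y * 2^(p+N) - 1 := by field_simp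
      rw [hexp]
      linarith
    · intro N
      have hpos : (0:ℝ) < 2^(p+N) := by positivity
      rw [div_le_iff₀ hpos]
      exact Int.floor_le _
  exact hmain.sub tendsto_const_nhds

lemma floor_pow_div (y : ℝ) (j d : ℕ) : ⌊y * 2^j⌋ = ⌊y * 2^(j+d)⌋ / 2^d := by
  set A := ⌊y * 2^(j+d)⌋ with hA
  have hd : (0:ℤ) < 2^d := by positivity
  have hmod0 : 0 ≤ A % 2^d := Int.emod_nonneg _ (ne_of_gt hd)
  have hmod1 : A % 2^d < 2^d := Int.emod_lt_of_pos _ hd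
  have hdm : A = 2^d * (A / 2^d) + A % 2^d := (Int.mul_ediv_add_emod _ _).symm
  have hfl : (A:ℝ) ≤ y * 2^(j+d) := Int.floor_le _
  have hfu : y * 2^(j+d) < A + 1 := Int.lt_floor_add_one _
  have hpow : (2:ℝ)^(j+d) = 2^j * 2^d := by rw [pow_add]
  have h2d : (0:ℝ) < 2^d := by positivity
  have hZ1 : 2^d * (A / 2^d) ≤ A := by linarith
  have hZ2 : A + 1 ≤ (A / 2^d + 1) * 2^d := by linarith [hdm, hmod1]
  rw [Int.floor_eq_iff]
  constructor
  · have hZ1' : (A / 2^d) * 2^d ≤ A := by linarith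
    have hR1 : ((A / 2^d : ℤ) : ℝ) * 2^d ≤ (A:ℝ) := by exact_mod_cast hZ1'
    rw [← mul_le_mul_iff_of_pos_right h2d]
    calc ((A / 2^d : ℤ) : ℝ) * 2^d ≤ (A:ℝ) := hR1
      _ ≤ y * 2^(j+d) := hfl
      _ = y * 2^j * 2^d := by rw [hpow]; ring
  · have hR2 : (A:ℝ) + 1 ≤ (((A / 2^d : ℤ) : ℝ) + 1) * 2^d := by exact_mod_cast hZ2
    rw [← mul_lt_mul_iff_of_pos_right h2d]
    calc y * 2^j * 2^d = y * 2^(j+d) := by rw [hpow]; ring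
      _ < (A:ℝ) + 1 := hfu
      _ ≤ (((A / 2^d : ℤ) : ℝ) + 1) * 2^d := hR2

lemma binDigit_eq_of_floor_eq (y z : ℝ) (j p : ℕ) (hj : j ≤ p)
    (hf : ⌊y * 2^p⌋ = ⌊z * 2^p⌋) : binDigit y j = binDigit z j := by
  have hd : p = j + (p - j) := by omega
  unfold binDigit
  rw [floor_pow_div y j (p - j), floor_pow_div z j (p - j), ← hd, hf]

theorem key_inequality
    (x h : ℝ) (hx0 : 0 ≤ x) (hh : 0 < h) (hx1 : x + h < 1)
    (p : ℕ) (hp1 : (1/2 : ℝ)^(p+1) < h) (hp2 : h ≤ (1/2 : ℝ)^p)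
    (k0 : ℕ)
    (hk0agree : ∀ j : ℕ, 1 ≤ j → j ≤ k0 → binDigit x j = binDigit (x + h) j)
    (hk0diff : binDigit x (k0+1) ≠ binDigit (x + h) (k0+1))
    (hk0p : k0 < p) :
    (∑' k : ℕ, (1 - (binDigit x (p+1+k) : ℝ) - (binDigit (x + h) (p+1+k) : ℝ))
        / 2^(p+1+k)) ≤ h ∧
    ∀ m : ℕ, binDigit x (p+m+1) = 0 →
      -h * (1 - (1/2 : ℝ)^m) ≤
        ∑' k : ℕ, (1 - (binDigit x (p+1+k) : ℝ) - (binDigit (x + h) (p+1+k) : ℝ))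
          / 2^(p+1+k) := by
  have hxh0 : (0:ℝ) ≤ x + h := by linarith
  have h2p : (0:ℝ) < 2^p := by positivity
  set A := ⌊x * 2^p⌋ with hA
  set B := ⌊(x + h) * 2^p⌋ with hB
  -- h * 2^p ≤ 1
  have hhalf : (1/2:ℝ)^p * 2^p = 1 := by rw [← mul_pow]; norm_num
  have hH : h * 2^p ≤ 1 := by nlinarith
  -- B = A + 1
  have hAB : A ≤ B := Int.floor_le_floor (by nlinarith)
  have hBA : B ≤ A + 1 := by
    have h1 : (x + h) * 2^p ≤ x * 2^p + 1 := by nlinarith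
    calc B ≤ ⌊x * 2^p + 1⌋ := Int.floor_le_floor h1
      _ = A + 1 := by rw [hA, ← Int.floor_add_one]
  have hBeq : B = A + 1 := by
    rcases eq_or_lt_of_le hAB with heq | hlt
    · exfalso
      exact hk0diff (binDigit_eq_of_floor_eq x (x+h) (k0+1) p (by omega) heq)
    · omega
  -- sums
  have hs1 := digit_hasSum x hx0 p
  have hs2 := digit_hasSum (x + h) hxh0 p
  have hgeo : HasSum (fun k : ℕ => (1:ℝ) / 2^(p+1+k)) (2 / 2^(p+1)) := by
    have hg : HasSum (fun k : ℕ => (1/2:ℝ)^k) 2 := by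
      have hgg := hasSum_geometric_of_lt_one (by norm_num : (0:ℝ) ≤ 1/2) (by norm_num : (1/2:ℝ) < 1)
      norm_num at hgg
      exact hgg
    have := hg.mul_left ((1:ℝ) / 2^(p+1))
    have hfe : (fun k : ℕ => (1:ℝ) / 2^(p+1) * (1/2)^k) = fun k : ℕ => (1:ℝ) / 2^(p+1+k) := by
      funext k
      rw [pow_add, div_pow]
      norm_num
      ring
    rw [hfe] at this
    rw [show (2:ℝ) / 2^(p+1) = 1 / 2^(p+1) * 2 by ring]
    exact this
  have htot := (hgeo.sub hs1).sub hs2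
  have hfe2 : (fun k : ℕ => (1:ℝ) / 2^(p+1+k) - (binDigit x (p+1+k) : ℝ) / 2^(p+1+k)
        - (binDigit (x + h) (p+1+k) : ℝ) / 2^(p+1+k))
      = fun k : ℕ => (1 - (binDigit x (p+1+k) : ℝ) - (binDigit (x + h) (p+1+k) : ℝ))
          / 2^(p+1+k) := by
    funext k
    ring
  rw [hfe2] at htot
  have htsum := htot.tsum_eq
  rw [htsum]
  have hval : 2 / 2^(p+1) - (x - (A:ℝ) / 2^p) - ((x + h) - (B:ℝ) / 2^p)
      = (2 * A + 2) / 2^p - 2 * x - h := by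
    rw [hBeq]
    push_cast
    rw [pow_succ]
    field_simp
    ring
  rw [hval]
  -- floor facts
  have hfl : (A:ℝ) ≤ x * 2^p := Int.floor_le _
  have hfu : x * 2^p < A + 1 := Int.lt_floor_add_one _
  have hBle : ((A:ℝ) + 1) ≤ (x + h) * 2^p := by
    have := Int.floor_le ((x + h) * 2^p)
    rw [← hB, hBeq] at this
    push_cast at this
    linarith
  constructor
  · -- first inequality
    have key : (2 * (A:ℝ) + 2) / 2^p ≤ 2 * (x + h) := by
      rw [div_le_iff₀ h2p]
      nlinarith
    linarith
  · intro m hdig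
    -- digit condition gives x * 2^p * 2^(m+1) < (A+1)*2^(m+1) - 1
    set C := ⌊x * 2^(p+m+1)⌋ with hC
    have hC0 : (0:ℤ) ≤ C := Int.floor_nonneg.2 (by positivity)
    have hCev : (2:ℤ) ∣ C := by
      have : C.toNat % 2 = 0 := hdig
      omega
    have hpows : (2:ℝ)^(p+m+1) = 2^p * 2^(m+1) := by rw [← pow_add]; ring_nf
    have hCl : (A:ℤ) * 2^(m+1) ≤ C := by
      rw [hC, Int.le_floor]
      push_cast
      rw [hpows]
      nlinarith [pow_pos (by norm_num : (0:ℝ) < 2) (m+1)]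
    have hCu : C < (A + 1) * 2^(m+1) := by
      rw [hC, Int.floor_lt]
      push_cast
      rw [hpows]
      nlinarith [pow_pos (by norm_num : (0:ℝ) < 2) (m+1)]
    have hEev : (2:ℤ) ∣ (A + 1) * 2^(m+1) := Dvd.dvd.mul_left (dvd_pow_self 2 (Nat.succ_ne_zero m)) _
    have hCu2 : C ≤ (A + 1) * 2^(m+1) - 2 := by omega
    have hfr : x * 2^p * 2^(m+1) < ((A:ℝ) + 1) * 2^(m+1) - 1 := by
      have h1 : x * 2^(p+m+1) < (C:ℝ) + 1 := Int.lt_floor_add_one _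
      have h2 : (C:ℝ) + 1 ≤ ((A:ℝ) + 1) * 2^(m+1) - 1 := by
        have : ((C:ℤ):ℝ) ≤ (((A + 1) * 2^(m+1) - 2 : ℤ) : ℝ) := by exact_mod_cast hCu2
        push_cast at this
        linarith
      rw [hpows] at h1
      linarith
    -- conclude
    have hm2 : (0:ℝ) < 2^m := by positivity
    have e1 : (1/2:ℝ)^m * 2^m = 1 := by rw [← mul_pow]; norm_num
    have hps : (2:ℝ)^(m+1) = 2^m * 2 := by rw [pow_succ]
    rw [hps] at hfr
    have key2 : h * (1/2:ℝ)^m * (2^p * 2^m) ≤ ((2 * (A:ℝ) + 2) / 2^p - 2 * x) * (2^p * 2^m) := by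
      have l1 : h * (1/2:ℝ)^m * (2^p * 2^m) = h * 2^p * ((1/2:ℝ)^m * 2^m) := by ring
      have l2 : ((2 * (A:ℝ) + 2) / 2^p - 2 * x) * (2^p * 2^m)
          = ((2 * (A:ℝ) + 2) / 2^p * 2^p) * 2^m - 2 * x * 2^p * 2^m := by ring
      have l3 : (2 * (A:ℝ) + 2) / 2^p * 2^p = 2 * A + 2 := by
        field_simp
      rw [l1, e1, l2, l3, mul_one]
      linarith [hfr, hH]
    have key3 : h * (1/2:ℝ)^m ≤ (2 * (A:ℝ) + 2) / 2^p - 2 * x := by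
      have hpos : (0:ℝ) < 2^p * 2^m := by positivity
      exact le_of_mul_le_mul_right key2 hpos
    linarith
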